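/- arXiv:2008.10157 — 2 statements merged into one kernel-verified Lean document; each statement's English description precedes it below -/
import Mathlib

section
/- Let H^t := ∇²f(x^t) + εI (which is invertible). Let x^t, v^t ∈ ℝ^{np} be generated by the primal–dual iteration x^{t+1} = x^t − (H^t)^{-1}[∇f(x^t) + (I − 𝐖)^{1/2} v^t + α(I − 𝐖)x^t], v^{t+1} = v^t + α(I − 𝐖)^{1/2} x^{t+1}, initialized with x^0 = 0 and v^0 = 0; and let x̃^t, u^t ∈ ℝ^{np} be generated by the Newton tracking recursion x̃^{t+1} = x̃^t − u^t, u^{t+1} = (∇²f(x̃^{t+1}) + εI)^{-1}[ (∇²f(x̃^t) + εI)u^t + ∇f(x̃^{t+1}) − ∇f(x̃^t) + α(I − 𝐖)(2x̃^{t+1} − x̃^t) ], initialized with x̃^0 = 0 and u^0 = (∇²f(0) + εI)^{-1}∇f(0). Then x^t = x̃^t for every t ≥ 0, and u^t = x^t − x^{t+1} for every t ≥ 0. -/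
open Matrix Kronecker
open scoped InnerProductSpace

noncomputable section

/-- Local decision space `ℝ^p`. -/
abbrev Ep (p : ℕ) : Type := EuclideanSpace ℝ (Fin p)

/-- Stacked space `ℝ^{np}`. -/
abbrev Vnp (n p : ℕ) : Type := EuclideanSpace ℝ (Fin n × Fin p)

/-- The `i`-th block `x_i ∈ ℝ^p` of a stacked vector `x ∈ ℝ^{np}`. -/
def blk {n p : ℕ} (x : Vnp n p) (i : Fin n) : Ep p := WithLp.toLp 2 (fun j => x (i, j))

/-- Aggregate objective `f(x) = ∑ i, f_i(x_i)`. -/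
def aggF {n p : ℕ} (f : Fin n → Ep p → ℝ) (x : Vnp n p) : ℝ := ∑ i, f i (blk x i)

/-- Stacked gradient `∇f(x) = [∇f_1(x_1); …; ∇f_n(x_n)]`. -/
def aggGrad {n p : ℕ} (g : Fin n → Ep p → Ep p) (x : Vnp n p) : Vnp n p :=
  WithLp.toLp 2 (fun ij : Fin n × Fin p => g ij.1 (blk x ij.1) ij.2)

/-- Block-diagonal Hessian `∇²f(x)` applied to `w`. -/
def aggHess {n p : ℕ} (h : Fin n → Ep p → (Ep p →L[ℝ] Ep p)) (x w : Vnp n p) : Vnp n p :=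
  WithLp.toLp 2 (fun ij : Fin n × Fin p => h ij.1 (blk x ij.1) (blk w ij.1) ij.2)

/-- Square root of a positive semidefinite matrix (Mathlib's former `Matrix.PosSemidef.sqrt`). -/
def Matrix.PosSemidef.sqrt {m : Type*} [Fintype m] [DecidableEq m]
    {A : Matrix m m ℝ} (hA : A.PosSemidef) : Matrix m m ℝ :=
  hA.1.eigenvectorUnitary.1 * diagonal ((↑) ∘ (√·) ∘ hA.1.eigenvalues) *
    (star hA.1.eigenvectorUnitary : Matrix m m ℝ)

/-- `𝐖 = W ⊗ I_p`. -/
def bigW {n : ℕ} (p : ℕ) (W : Matrix (Fin n) (Fin n) ℝ) :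
    Matrix (Fin n × Fin p) (Fin n × Fin p) ℝ :=
  W ⊗ₖ (1 : Matrix (Fin p) (Fin p) ℝ)

/-- `I − 𝐖`. -/
def IWmat {n : ℕ} (p : ℕ) (W : Matrix (Fin n) (Fin n) ℝ) :
    Matrix (Fin n × Fin p) (Fin n × Fin p) ℝ :=
  1 - bigW p W

lemma psd_sqrt_mul_self {m : Type*} [Fintype m] [DecidableEq m]
    {A : Matrix m m ℝ} (hA : A.PosSemidef) : hA.sqrt * hA.sqrt = A := by
  conv_rhs => rw [hA.1.spectral_theorem]
  have hU : (star hA.1.eigenvectorUnitary : Matrix m m ℝ) * hA.1.eigenvectorUnitary.1 = 1 :=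
    Unitary.star_mul_self_of_mem hA.1.eigenvectorUnitary.2
  unfold Matrix.PosSemidef.sqrt
  rw [Unitary.conjStarAlgAut_apply]
  calc _ = hA.1.eigenvectorUnitary.1 * (diagonal ((↑) ∘ (√·) ∘ hA.1.eigenvalues) *
      ((star hA.1.eigenvectorUnitary : Matrix m m ℝ) * hA.1.eigenvectorUnitary.1) *
      diagonal ((↑) ∘ (√·) ∘ hA.1.eigenvalues)) * (star hA.1.eigenvectorUnitary : Matrix m m ℝ) := by
        simp only [Matrix.mul_assoc]
    _ = _ := by
      rw [hU, Matrix.mul_one, diagonal_mul_diagonal]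
      congr 3
      funext i
      simp [Real.mul_self_sqrt (hA.eigenvalues_nonneg i)]

lemma toEuclideanLin_mul {m : Type*} [Fintype m] [DecidableEq m] (A B : Matrix m m ℝ)
    (x : EuclideanSpace ℝ m) :
    Matrix.toEuclideanLin (A * B) x = Matrix.toEuclideanLin A (Matrix.toEuclideanLin B x) := by
  simp [Matrix.toEuclideanLin_apply, mulVec_mulVec]

lemma aggHess_sub {n p : ℕ} (h : Fin n → Ep p → (Ep p →L[ℝ] Ep p)) (z a b : Vnp n p) :
    aggHess h z (a - b) = aggHess h z a - aggHess h z b := by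
  ext ij
  show (h ij.1 (blk z ij.1)) (blk a ij.1 - blk b ij.1) ij.2 = _
  rw [map_sub]
  rfl

lemma inner_aggHess {n p : ℕ} (h : Fin n → Ep p → (Ep p →L[ℝ] Ep p)) (z w : Vnp n p) :
    ⟪aggHess h z w, w⟫_ℝ = ∑ i, ⟪(h i (blk z i)) (blk w i), blk w i⟫_ℝ := by
  simp only [PiLp.inner_apply, RCLike.inner_apply, starRingEnd_apply, star_trivial]
  rw [Fintype.sum_prod_type]
  simp [aggHess, blk]

lemma aggHess_inj {n p : ℕ} (h : Fin n → Ep p → (Ep p →L[ℝ] Ep p)) {μf : ℝ} (hμpos : 0 < μf)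
    (hlow : ∀ i z w, μf * ‖w‖ ^ 2 ≤ ⟪(h i z) w, w⟫_ℝ) {ε : ℝ} (hε : 0 < ε)
    (z a b : Vnp n p) (heq : aggHess h z a + ε • a = aggHess h z b + ε • b) : a = b := by
  set w := a - b with hw
  have h0 : aggHess h z w + ε • w = 0 := by
    rw [hw, aggHess_sub, smul_sub, sub_add_sub_comm, sub_eq_zero]
    exact heq
  have hinner : ⟪aggHess h z w, w⟫_ℝ + ε * ‖w‖ ^ 2 = 0 := by
    have h1 : ⟪aggHess h z w + ε • w, w⟫_ℝ = (0 : ℝ) := by rw [h0, inner_zero_left]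
    rwa [inner_add_left, real_inner_smul_left, real_inner_self_eq_norm_sq] at h1
  have hnn : 0 ≤ ⟪aggHess h z w, w⟫_ℝ := by
    rw [inner_aggHess]
    exact Finset.sum_nonneg fun i _ =>
      le_trans (mul_nonneg hμpos.le (sq_nonneg _)) (hlow i (blk z i) (blk w i))
  have hle : ε * ‖w‖ ^ 2 ≤ 0 := by linarith
  have hwz : w = 0 := by
    by_contra hne
    have hwp : 0 < ‖w‖ := norm_pos_iff.mpr hne
    have := mul_pos hε (pow_pos hwp 2); linarith
  rw [← sub_eq_zero]; exact hwz

/-- Equivalence of the primal–dual iteration and the Newton tracking recursion: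
`x^t = x̃^t` and `u^t = x^t − x^{t+1}` for all `t`. -/
theorem newton_tracking_primal_dual_equivalence
    {n p : ℕ} (hn : 0 < n) (hp : 0 < p)
    (W : Matrix (Fin n) (Fin n) ℝ)
    (hWnonneg : ∀ i j, 0 ≤ W i j) (hWsymm : W.IsSymm)
    (hWstoch : W *ᵥ (fun _ => (1 : ℝ)) = fun _ => 1)
    (hWker : ∀ y : Fin n → ℝ, (1 - W) *ᵥ y = 0 ↔ ∃ c : ℝ, y = fun _ => c)
    (hpsd : (IWmat p W).PosSemidef)
    (f : Fin n → Ep p → ℝ) (g : Fin n → Ep p → Ep p)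
    (h : Fin n → Ep p → (Ep p →L[ℝ] Ep p))
    (μf Lf : ℝ) (hμpos : 0 < μf) (hμL : μf ≤ Lf)
    (hC2 : ∀ i, ContDiff ℝ 2 (f i))
    (hg : ∀ i z, HasGradientAt (f i) (g i z) z)
    (hh : ∀ i z, HasFDerivAt (g i) (h i z) z)
    (hlow : ∀ i z w, μf * ‖w‖ ^ 2 ≤ ⟪(h i z) w, w⟫_ℝ)
    (hup : ∀ i z w, ⟪(h i z) w, w⟫_ℝ ≤ Lf * ‖w‖ ^ 2)
    (α ε : ℝ) (hα : 0 < α) (hε : 0 < ε)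
    -- the primal–dual iteration
    (x v : ℕ → Vnp n p)
    (hprimal : ∀ t, aggHess h (x t) (x t - x (t + 1)) + ε • (x t - x (t + 1)) =
      aggGrad g (x t) + Matrix.toEuclideanLin hpsd.sqrt (v t)
        + α • Matrix.toEuclideanLin (IWmat p W) (x t))
    (hdual : ∀ t, v (t + 1) = v t + α • Matrix.toEuclideanLin hpsd.sqrt (x (t + 1)))
    (hx0 : x 0 = 0) (hv0 : v 0 = 0)
    -- the Newton tracking recursion
    (xt u : ℕ → Vnp n p)
    (hnt1 : ∀ t, xt (t + 1) = xt t - u t)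
    (hnt2 : ∀ t, aggHess h (xt (t + 1)) (u (t + 1)) + ε • u (t + 1) =
      aggHess h (xt t) (u t) + ε • u t
        + aggGrad g (xt (t + 1)) - aggGrad g (xt t)
        + α • Matrix.toEuclideanLin (IWmat p W) ((2 : ℝ) • xt (t + 1) - xt t))
    (hxt0 : xt 0 = 0)
    (hu0 : aggHess h (xt 0) (u 0) + ε • u 0 = aggGrad g (xt 0)) :
    (∀ t, x t = xt t) ∧ (∀ t, u t = x t - x (t + 1)) := by
  have inj := aggHess_inj h hμpos hlow hε
  have sqrt2 : ∀ y : Vnp n p, Matrix.toEuclideanLin hpsd.sqrt (Matrix.toEuclideanLin hpsd.sqrt y)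
      = Matrix.toEuclideanLin (IWmat p W) y := fun y => by
    rw [← toEuclideanLin_mul, psd_sqrt_mul_self hpsd]
  have key : ∀ t, x t = xt t ∧ u t = x t - x (t + 1) := by
    intro t
    induction t with
    | zero =>
      refine ⟨hx0.trans hxt0.symm, ?_⟩
      have e0 := hprimal 0
      rw [hx0, hv0] at e0
      simp only [map_zero, smul_zero, add_zero] at e0
      have hu0' := hu0
      rw [hxt0] at hu0'
      rw [hx0]
      exact inj 0 _ _ (by rw [e0, hu0'])
    | succ t ih =>
      obtain ⟨ihx, ihu⟩ := ih
      have hx1 : x (t + 1) = xt (t + 1) := by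
        rw [hnt1 t, ← ihx, ihu]; abel
      refine ⟨hx1, ?_⟩
      have e1 := hnt2 t
      rw [← hx1, ← ihx, ihu, hprimal t] at e1
      have e2 := hprimal (t + 1)
      rw [hdual t] at e2
      refine inj (x (t + 1)) _ _ ?_
      rw [e1, e2, map_add, _root_.map_smul, sqrt2, map_sub, _root_.map_smul]
      module
  exact ⟨fun t => (key t).1, fun t => (key t).2⟩
end
end

section
/- Under the Newton tracking primal–dual iteration, suppose v^{t+1} − v* lies in the column space of (I − 𝐖)^{1/2}. Then for any constants β > 1 and φ > 1 and for κ := 2L_f + α·λ_max(I − 𝐖), it holds that ‖v^{t+1} − v*‖² ≤ (1/λ̂_min(I − 𝐖)) · [ ( β·ε²/(β−1) + β·φ·κ²/(φ−1) )·‖x^{t+1} − x^t‖² + β·φ·L_f²·‖x^{t+1} − x*‖² ]. -/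
open Matrix Kronecker
open scoped InnerProductSpace

noncomputable section

/-- Largest eigenvalue of a (square, real) matrix. -/
def lamMax {m : Type*} [Fintype m] [DecidableEq m] (A : Matrix m m ℝ) : ℝ :=
  sSup {r : ℝ | Module.End.HasEigenvalue (Matrix.toLin' A) r}

/-- Smallest nonzero eigenvalue of a (square, real) matrix. -/
def lamMinNZ {m : Type*} [Fintype m] [DecidableEq m] (A : Matrix m m ℝ) : ℝ :=
  sInf {r : ℝ | r ≠ 0 ∧ Module.End.HasEigenvalue (Matrix.toLin' A) r}


-- ===== auxiliary lemmas =====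

lemma eucl_norm_sq {ι : Type*} [Fintype ι] (x : EuclideanSpace ℝ ι) :
    ‖x‖ ^ 2 = ∑ i, x i ^ 2 := by
  rw [EuclideanSpace.norm_eq, Real.sq_sqrt (by positivity)]
  simp [sq_abs]

lemma peter_paul {E : Type*} [NormedAddCommGroup E] [InnerProductSpace ℝ E]
    (a b : E) {θ : ℝ} (hθ : 1 < θ) :
    ‖a + b‖ ^ 2 ≤ (θ / (θ - 1)) * ‖a‖ ^ 2 + θ * ‖b‖ ^ 2 := by
  have hc : 0 < θ - 1 := by linarith
  have h1 : ‖a + b‖ ^ 2 = ‖a‖ ^ 2 + 2 * ⟪a, b⟫_ℝ + ‖b‖ ^ 2 := by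
    rw [← real_inner_self_eq_norm_sq, ← real_inner_self_eq_norm_sq,
      ← real_inner_self_eq_norm_sq, inner_add_add_self, real_inner_comm b a]; ring
  have h2 : ⟪a, b⟫_ℝ ≤ ‖a‖ * ‖b‖ := real_inner_le_norm a b
  have key : 2 * (‖a‖ * ‖b‖) ≤ ‖a‖ ^ 2 / (θ - 1) + (θ - 1) * ‖b‖ ^ 2 := by
    rw [div_add' _ _ _ hc.ne', le_div_iff₀ hc]
    nlinarith [sq_nonneg (‖a‖ - (θ - 1) * ‖b‖)]
  have hid : θ / (θ - 1) * ‖a‖ ^ 2 = ‖a‖ ^ 2 + ‖a‖ ^ 2 / (θ - 1) := by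
    field_simp; ring
  linarith

lemma symm_op_norm_bound {E : Type*} [NormedAddCommGroup E] [InnerProductSpace ℝ E]
    (T : E →L[ℝ] E) (L : ℝ) (hL : 0 ≤ L)
    (hsym : ∀ v w, ⟪T v, w⟫_ℝ = ⟪T w, v⟫_ℝ)
    (h0 : ∀ w, 0 ≤ ⟪T w, w⟫_ℝ) (hup : ∀ w, ⟪T w, w⟫_ℝ ≤ L * ‖w‖ ^ 2)
    (w : E) : ‖T w‖ ≤ L * ‖w‖ := by
  have CS : ∀ a b : E, ⟪T a, b⟫_ℝ ^ 2 ≤ ⟪T a, a⟫_ℝ * ⟪T b, b⟫_ℝ := by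
    intro a b
    have hq : ∀ s : ℝ, 0 ≤ ⟪T b, b⟫_ℝ * (s * s) + (2 * ⟪T a, b⟫_ℝ) * s + ⟪T a, a⟫_ℝ := by
      intro s
      have hp := h0 (a + s • b)
      have hx : ⟪T (a + s • b), a + s • b⟫_ℝ =
          ⟪T b, b⟫_ℝ * (s * s) + (2 * ⟪T a, b⟫_ℝ) * s + ⟪T a, a⟫_ℝ := by
        rw [map_add, T.map_smul]
        simp only [real_inner_add_add_self, real_inner_smul_left, real_inner_smul_right,
          inner_add_left, inner_add_right]
        rw [hsym b a]; ring
      linarith [hx ▸ hp]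
    have hd := discrim_le_zero hq
    rw [discrim] at hd
    nlinarith
  have h1 : ‖T w‖ ^ 2 = ⟪T w, T w⟫_ℝ := (real_inner_self_eq_norm_sq _).symm
  have key : (‖T w‖ ^ 2) ^ 2 ≤ (L * ‖w‖ ^ 2) * (L * ‖T w‖ ^ 2) := by
    have e : ⟪T w, T w⟫_ℝ ^ 2 ≤ ⟪T w, w⟫_ℝ * ⟪T (T w), T w⟫_ℝ := CS w (T w)
    calc (‖T w‖ ^ 2) ^ 2 = ⟪T w, T w⟫_ℝ ^ 2 := by rw [h1]
      _ ≤ ⟪T w, w⟫_ℝ * ⟪T (T w), T w⟫_ℝ := e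
      _ ≤ (L * ‖w‖ ^ 2) * (L * ‖T w‖ ^ 2) := by
          apply mul_le_mul (hup w) (hup (T w)) (h0 (T w)) (by positivity)
  rcases eq_or_lt_of_le (norm_nonneg (T w)) with hz | hz
  · rw [← hz]; positivity
  · have h2 : ‖T w‖ ^ 2 ≤ (L * ‖w‖) ^ 2 := by nlinarith
    have h3 := Real.sqrt_le_sqrt h2
    rwa [Real.sqrt_sq (norm_nonneg _), Real.sqrt_sq (by positivity)] at h3

section Eig
variable {m : Type*} [Fintype m] [DecidableEq m]

lemma Matrix.PosSemidef.sqrt_mul_self {A : Matrix m m ℝ} (hA : A.PosSemidef) :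
    hA.sqrt * hA.sqrt = A := by
  have hU : (star hA.1.eigenvectorUnitary : Matrix m m ℝ) * hA.1.eigenvectorUnitary.1 = 1 :=
    Unitary.coe_star_mul_self _
  have hD : diagonal (fun i => √(hA.1.eigenvalues i)) *
      diagonal (fun i => √(hA.1.eigenvalues i)) = diagonal (RCLike.ofReal ∘ hA.1.eigenvalues) := by
    rw [diagonal_mul_diagonal]
    congr 1; funext i
    simp [Real.mul_self_sqrt (hA.eigenvalues_nonneg i)]
  conv_rhs => rw [hA.1.spectral_theorem, Unitary.conjStarAlgAut_apply]
  unfold Matrix.PosSemidef.sqrt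
  change hA.1.eigenvectorUnitary.1 * diagonal (fun i => √(hA.1.eigenvalues i)) *
      (star hA.1.eigenvectorUnitary : Matrix m m ℝ) * (hA.1.eigenvectorUnitary.1 *
      diagonal (fun i => √(hA.1.eigenvalues i)) * (star hA.1.eigenvectorUnitary : Matrix m m ℝ)) = _
  calc _ = hA.1.eigenvectorUnitary.1 * diagonal (fun i => √(hA.1.eigenvalues i)) *
        ((star hA.1.eigenvectorUnitary : Matrix m m ℝ) * hA.1.eigenvectorUnitary.1) *
        diagonal (fun i => √(hA.1.eigenvalues i)) *
        (star hA.1.eigenvectorUnitary : Matrix m m ℝ) := by simp only [Matrix.mul_assoc]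
    _ = _ := by rw [hU, Matrix.mul_one, Matrix.mul_assoc _ (diagonal _) (diagonal _), hD]

lemma isHermitian_psdSqrt {A : Matrix m m ℝ} (hA : A.PosSemidef) :
    hA.sqrt.IsHermitian := by
  unfold Matrix.PosSemidef.sqrt
  rw [Matrix.IsHermitian, conjTranspose_mul, conjTranspose_mul, diagonal_conjTranspose,
    Matrix.star_eq_conjTranspose, conjTranspose_conjTranspose, star_trivial, Matrix.mul_assoc]

lemma hasEigenvalue_toLin'_of_toEuclidean {A : Matrix m m ℝ} {μ : ℝ}
    (h : Module.End.HasEigenvalue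
      (Matrix.toEuclideanLin A : Module.End ℝ (EuclideanSpace ℝ m)) μ) :
    Module.End.HasEigenvalue (Matrix.toLin' A) μ := by
  obtain ⟨v, hv⟩ := h.exists_hasEigenvector
  have hv1 : Matrix.toEuclideanLin A v = μ • v := hv.apply_eq_smul
  refine Module.End.hasEigenvalue_of_hasEigenvector
    (x := (WithLp.equiv 2 (m → ℝ)) v) ⟨?_, ?_⟩
  · rw [Module.End.mem_eigenspace_iff]
    calc Matrix.toLin' A ((WithLp.equiv 2 (m → ℝ)) v)
        = (WithLp.equiv 2 (m → ℝ)) (Matrix.toEuclideanLin A v) := rfl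
      _ = μ • (WithLp.equiv 2 (m → ℝ)) v := by rw [hv1]; rfl
  · intro h0
    exact hv.2 ((WithLp.equiv 2 (m → ℝ)).injective (by simpa using h0))

lemma eig_nonneg_of_psd {A : Matrix m m ℝ} (hA : A.PosSemidef) {μ : ℝ}
    (h : Module.End.HasEigenvalue (Matrix.toLin' A) μ) : 0 ≤ μ := by
  obtain ⟨v, hv⟩ := h.exists_hasEigenvector
  have hv1 : A *ᵥ v = μ • v := by
    have := hv.apply_eq_smul; rwa [Matrix.toLin'_apply] at this
  have h2 := hA.dotProduct_mulVec_nonneg v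
  rw [hv1] at h2
  have h2' : (0:ℝ) ≤ v ⬝ᵥ (μ • v) := by simpa [dotProduct] using h2
  have hvv : 0 < v ⬝ᵥ v := by
    have hnn : (0:ℝ) ≤ v ⬝ᵥ v := Finset.sum_nonneg fun i _ => mul_self_nonneg _
    have hne : v ⬝ᵥ v ≠ 0 := fun h' => hv.2 ((dotProduct_self_eq_zero).mp h')
    exact lt_of_le_of_ne hnn (Ne.symm hne)
  rw [dotProduct_smul] at h2'
  have : μ * (v ⬝ᵥ v) = μ • (v ⬝ᵥ v) := rfl
  nlinarith [h2']

lemma lamMinNZ_nonneg {A : Matrix m m ℝ} (hA : A.PosSemidef) : 0 ≤ lamMinNZ A :=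
  Real.sInf_nonneg fun _ hr => eig_nonneg_of_psd hA hr.2

lemma form_nonneg_of_psd {A : Matrix m m ℝ} (hA : A.PosSemidef)
    (x : EuclideanSpace ℝ m) : 0 ≤ ⟪Matrix.toEuclideanLin A x, x⟫_ℝ := by
  have h := hA.dotProduct_mulVec_nonneg ((WithLp.equiv 2 (m → ℝ)) x)
  have heq : ⟪Matrix.toEuclideanLin A x, x⟫_ℝ =
      star ((WithLp.equiv 2 (m → ℝ)) x) ⬝ᵥ (A *ᵥ (WithLp.equiv 2 (m → ℝ)) x) := by
    simp [PiLp.inner_apply, Matrix.toEuclideanLin_apply, dotProduct, mul_comm]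
  rw [heq]; simpa using h

lemma norm_toEuclideanLin_le_lamMax [Nonempty m] {A : Matrix m m ℝ} (hA : A.PosSemidef)
    (u : EuclideanSpace ℝ m) : ‖Matrix.toEuclideanLin A u‖ ≤ lamMax A * ‖u‖ := by
  have hd : Module.finrank ℝ (EuclideanSpace ℝ m) = Fintype.card m :=
    finrank_euclideanSpace
  have hT : (Matrix.toEuclideanLin A).IsSymmetric :=
    Matrix.isHermitian_iff_isSymmetric.mp hA.isHermitian
  set b := hT.eigenvectorBasis hd with hb
  set μ := hT.eigenvalues hd with hμ
  have hbdd : BddAbove {r : ℝ | Module.End.HasEigenvalue (Matrix.toLin' A) r} :=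
    Set.Finite.bddAbove (Module.End.finite_hasEigenvalue _)
  have hle : ∀ i, μ i ≤ lamMax A := fun i =>
    le_csSup hbdd (hasEigenvalue_toLin'_of_toEuclidean (hT.hasEigenvalue_eigenvalues hd i))
  have hnn : ∀ i, 0 ≤ μ i := by
    intro i
    have h1 := form_nonneg_of_psd hA (b i)
    rw [hT.apply_eigenvectorBasis hd i] at h1
    have hnb : ‖b i‖ = 1 := b.orthonormal.1 i
    simp only [RCLike.ofReal_real_eq_id, id_eq] at h1
    rw [real_inner_smul_left] at h1
    have hbb : ⟪b i, b i⟫_ℝ = 1 := by rw [real_inner_self_eq_norm_sq, hnb]; norm_num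
    rw [hbb] at h1; simpa using h1
  have hmax0 : 0 ≤ lamMax A := le_trans (hnn (Classical.arbitrary _)) (hle _)
  have hrepr : ∀ i, b.repr (Matrix.toEuclideanLin A u) i = μ i * b.repr u i :=
    fun i => hT.eigenvectorBasis_apply_self_apply hd u i
  have h1 : ‖Matrix.toEuclideanLin A u‖ ^ 2 ≤ (lamMax A * ‖u‖) ^ 2 := by
    rw [← b.repr.norm_map (Matrix.toEuclideanLin A u), ← b.repr.norm_map u,
      eucl_norm_sq, mul_pow, eucl_norm_sq]
    calc ∑ i, (b.repr (Matrix.toEuclideanLin A u) i) ^ 2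
        = ∑ i, (μ i)^2 * (b.repr u i) ^ 2 := by
          refine Finset.sum_congr rfl fun i _ => by rw [hrepr i]; ring
      _ ≤ ∑ i, (lamMax A)^2 * (b.repr u i) ^ 2 := by
          refine Finset.sum_le_sum fun i _ => ?_
          have := hle i
          nlinarith [hnn i, sq_nonneg (b.repr u i), mul_le_mul this this (hnn i) hmax0]
      _ = lamMax A ^ 2 * ∑ i, (b.repr u i) ^ 2 := (Finset.mul_sum _ _ _).symm
  have h3 := Real.sqrt_le_sqrt h1
  rwa [Real.sqrt_sq (norm_nonneg _), Real.sqrt_sq (by positivity)] at h3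

lemma sq_norm_le_inv_lamMinNZ {A : Matrix m m ℝ} (hA : A.PosSemidef)
    (y : EuclideanSpace ℝ m) :
    ‖Matrix.toEuclideanLin hA.sqrt y‖ ^ 2 ≤ (1 / lamMinNZ A) *
      ‖Matrix.toEuclideanLin hA.sqrt (Matrix.toEuclideanLin hA.sqrt y)‖ ^ 2 := by
  have hd : Module.finrank ℝ (EuclideanSpace ℝ m) = Fintype.card m := finrank_euclideanSpace
  have hT : (Matrix.toEuclideanLin hA.sqrt).IsSymmetric :=
    Matrix.isHermitian_iff_isSymmetric.mp (isHermitian_psdSqrt hA)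
  set b := hT.eigenvectorBasis hd with hbdef
  set σ := hT.eigenvalues hd with hσdef
  have happ : ∀ i, Matrix.toEuclideanLin hA.sqrt (b i) = σ i • b i := by
    intro i
    exact hT.apply_eigenvectorBasis hd i
  have hcomp : ∀ z, Matrix.toEuclideanLin hA.sqrt (Matrix.toEuclideanLin hA.sqrt z) =
      Matrix.toEuclideanLin A z := by
    intro z
    conv_rhs => rw [← hA.sqrt_mul_self]
    rw [Matrix.toEuclideanLin_eq_toLin, Matrix.toLin_mul _ (PiLp.basisFun 2 ℝ m) _]
    rfl
  set Sset : Set ℝ := {r : ℝ | r ≠ 0 ∧ Module.End.HasEigenvalue (Matrix.toLin' A) r} with hSdef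
  have hSetnn : ∀ r ∈ Sset, 0 ≤ r := fun r hr => eig_nonneg_of_psd hA hr.2
  have hbb : BddBelow Sset := ⟨0, hSetnn⟩
  have hlam_nn : 0 ≤ lamMinNZ A := Real.sInf_nonneg hSetnn
  have hmem : ∀ i, σ i ≠ 0 → σ i ^ 2 ∈ Sset := by
    intro i hi
    refine ⟨pow_ne_zero _ hi, hasEigenvalue_toLin'_of_toEuclidean ?_⟩
    refine Module.End.hasEigenvalue_of_hasEigenvector (x := b i) ⟨?_, ?_⟩
    · rw [Module.End.mem_eigenspace_iff]
      show Matrix.toEuclideanLin A (b i) = _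
      rw [← hcomp, happ i, LinearMap.map_smul, happ i, smul_smul, ← sq]
    · simpa using b.toBasis.ne_zero i
  have hle : ∀ i, σ i ≠ 0 → lamMinNZ A ≤ σ i ^ 2 := fun i hi => csInf_le hbb (hmem i hi)
  have hr1 : ∀ i, b.repr (Matrix.toEuclideanLin hA.sqrt y) i = σ i * b.repr y i :=
    fun i => hT.eigenvectorBasis_apply_self_apply hd y i
  have hr2 : ∀ i, b.repr (Matrix.toEuclideanLin hA.sqrt (Matrix.toEuclideanLin hA.sqrt y)) i
      = σ i * (σ i * b.repr y i) := by
    intro i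
    rw [hT.eigenvectorBasis_apply_self_apply hd _ i, hr1 i]
    simp [RCLike.ofReal_real_eq_id, hσdef]
  by_cases hall : ∀ i, σ i = 0
  · have h0 : Matrix.toEuclideanLin hA.sqrt y = 0 := by
      apply b.repr.injective
      rw [map_zero]
      ext i
      simp [hr1 i, hall i]
    rw [h0]
    simp only [norm_zero]
    have : (0:ℝ) ^ 2 = 0 := by norm_num
    rw [this]
    positivity
  · push_neg at hall
    obtain ⟨i0, hi0⟩ := hall
    have hlam_mem : lamMinNZ A ∈ Sset := by
      apply Set.Nonempty.csInf_mem ⟨_, hmem i0 hi0⟩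
      exact Set.Finite.subset (Module.End.finite_hasEigenvalue (Matrix.toLin' A))
        fun r hr => hr.2
    have hlam_pos : 0 < lamMinNZ A := lt_of_le_of_ne hlam_nn (Ne.symm hlam_mem.1)
    have key : lamMinNZ A * ‖Matrix.toEuclideanLin hA.sqrt y‖ ^ 2 ≤
        ‖Matrix.toEuclideanLin hA.sqrt (Matrix.toEuclideanLin hA.sqrt y)‖ ^ 2 := by
      rw [← b.repr.norm_map (Matrix.toEuclideanLin hA.sqrt y),
        ← b.repr.norm_map (Matrix.toEuclideanLin hA.sqrt (Matrix.toEuclideanLin hA.sqrt y)),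
        eucl_norm_sq, eucl_norm_sq, Finset.mul_sum]
      refine Finset.sum_le_sum fun i _ => ?_
      rw [hr1 i, hr2 i]
      by_cases hi : σ i = 0
      · simp [hi]
      · have hL := hle i hi
        nlinarith [mul_le_mul_of_nonneg_right hL (sq_nonneg (σ i * b.repr y i))]
    rw [one_div, inv_mul_eq_div, le_div_iff₀ hlam_pos, mul_comm]
    exact key

end Eig

lemma blk_norm_sq {n p : ℕ} (x : Vnp n p) : ‖x‖ ^ 2 = ∑ i, ‖blk x i‖ ^ 2 := by
  rw [eucl_norm_sq, Fintype.sum_prod_type]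
  refine Finset.sum_congr rfl fun i _ => ?_
  rw [eucl_norm_sq]
  rfl

lemma hess_symm {p : ℕ} (fi : Ep p → ℝ) (gi : Ep p → Ep p) (hi : Ep p → (Ep p →L[ℝ] Ep p))
    (hg : ∀ z, HasGradientAt fi (gi z) z)
    (hh : ∀ z, HasFDerivAt gi (hi z) z)
    (z v w : Ep p) : ⟪hi z v, w⟫_ℝ = ⟪hi z w, v⟫_ℝ := by
  have hf' : ∀ y, HasFDerivAt fi ((InnerProductSpace.toDual ℝ (Ep p)) (gi y)) y :=
    fun y => (hg y).hasFDerivAt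
  set J := (InnerProductSpace.toDual ℝ (Ep p)).toContinuousLinearEquiv.toContinuousLinearMap
  have hd : HasFDerivAt (fun y => (InnerProductSpace.toDual ℝ (Ep p)) (gi y))
      (J.comp (hi z)) z := J.hasFDerivAt.comp z (hh z)
  have hsec := second_derivative_symmetric hf' hd v w
  simpa [J, InnerProductSpace.toDual_apply_apply] using hsec

lemma block_lip {p : ℕ} (gi : Ep p → Ep p) (hi : Ep p → (Ep p →L[ℝ] Ep p)) (Lf : ℝ)
    (hh : ∀ z, HasFDerivAt gi (hi z) z) (hopn : ∀ z, ‖hi z‖ ≤ Lf)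
    (a b : Ep p) : ‖gi a - gi b‖ ≤ Lf * ‖a - b‖ :=
  (convex_univ (𝕜 := ℝ)).norm_image_sub_le_of_norm_hasFDerivWithin_le
    (fun x _ => (hh x).hasFDerivWithinAt) (fun x _ => hopn x)
    (Set.mem_univ b) (Set.mem_univ a)

lemma agg_norm_le {n p : ℕ} (d w : Vnp n p) (C : ℝ) (hC : 0 ≤ C)
    (hblk : ∀ i, ‖blk d i‖ ≤ C * ‖blk w i‖) : ‖d‖ ≤ C * ‖w‖ := by
  have h1 : ‖d‖ ^ 2 ≤ (C * ‖w‖) ^ 2 := by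
    rw [blk_norm_sq d, mul_pow, blk_norm_sq w, Finset.mul_sum]
    exact Finset.sum_le_sum fun i _ => by
      nlinarith [norm_nonneg (blk d i), norm_nonneg (blk w i), hblk i,
        mul_le_mul (hblk i) (hblk i) (norm_nonneg _) (by positivity)]
  have h3 := Real.sqrt_le_sqrt h1
  rwa [Real.sqrt_sq (norm_nonneg _), Real.sqrt_sq (by positivity)] at h3

set_option maxHeartbeats 1000000

/-- The dual-error bound: if `v^{t+1} − v*` lies in the column space of `(I−𝐖)^{1/2}`, then
`‖v^{t+1} − v*‖²` is bounded via `‖x^{t+1} − x^t‖²` and `‖x^{t+1} − x*‖²`. -/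
theorem newton_tracking_dual_error_bound
    {n p : ℕ} (hn : 0 < n) (hp : 0 < p)
    (W : Matrix (Fin n) (Fin n) ℝ)
    (hWnonneg : ∀ i j, 0 ≤ W i j) (hWsymm : W.IsSymm)
    (hWstoch : W *ᵥ (fun _ => (1 : ℝ)) = fun _ => 1)
    (hWker : ∀ y : Fin n → ℝ, (1 - W) *ᵥ y = 0 ↔ ∃ c : ℝ, y = fun _ => c)
    (hpsd : (IWmat p W).PosSemidef)
    (f : Fin n → Ep p → ℝ) (g : Fin n → Ep p → Ep p)
    (h : Fin n → Ep p → (Ep p →L[ℝ] Ep p))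
    (μf Lf : ℝ) (hμpos : 0 < μf) (hμL : μf ≤ Lf)
    (hC2 : ∀ i, ContDiff ℝ 2 (f i))
    (hg : ∀ i z, HasGradientAt (f i) (g i z) z)
    (hh : ∀ i z, HasFDerivAt (g i) (h i z) z)
    (hlow : ∀ i z w, μf * ‖w‖ ^ 2 ≤ ⟪(h i z) w, w⟫_ℝ)
    (hup : ∀ i z w, ⟪(h i z) w, w⟫_ℝ ≤ Lf * ‖w‖ ^ 2)
    (α ε : ℝ) (hα : 0 < α) (hε : 0 < ε)
    (x v : ℕ → Vnp n p)
    (hprimal : ∀ t, aggHess h (x t) (x t - x (t + 1)) + ε • (x t - x (t + 1)) =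
      aggGrad g (x t) + Matrix.toEuclideanLin hpsd.sqrt (v t)
        + α • Matrix.toEuclideanLin (IWmat p W) (x t))
    (hdual : ∀ t, v (t + 1) = v t + α • Matrix.toEuclideanLin hpsd.sqrt (x (t + 1)))
    (xs vs : Vnp n p)
    (hK1 : aggGrad g xs + Matrix.toEuclideanLin hpsd.sqrt vs = 0)
    (hK2 : Matrix.toEuclideanLin hpsd.sqrt xs = 0)
    (t : ℕ)
    (hcol : ∃ y : Vnp n p, v (t + 1) - vs = Matrix.toEuclideanLin hpsd.sqrt y)
    (β φ : ℝ) (hβ : 1 < β) (hφ : 1 < φ) :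
    ‖v (t + 1) - vs‖ ^ 2 ≤ (1 / lamMinNZ (IWmat p W)) *
      ((β * ε ^ 2 / (β - 1)
          + β * φ * (2 * Lf + α * lamMax (IWmat p W)) ^ 2 / (φ - 1))
            * ‖x (t + 1) - x t‖ ^ 2
        + β * φ * Lf ^ 2 * ‖x (t + 1) - xs‖ ^ 2) := by 
  classical
  have hLf0 : 0 ≤ Lf := le_trans hμpos.le hμL
  set S : Vnp n p →ₗ[ℝ] Vnp n p := Matrix.toEuclideanLin hpsd.sqrt with hSdef
  set T : Vnp n p →ₗ[ℝ] Vnp n p := Matrix.toEuclideanLin (IWmat p W) with hTdef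
  have hSS : ∀ z, S (S z) = T z := by
    intro z
    rw [hTdef, hSdef]
    conv_rhs => rw [← hpsd.sqrt_mul_self]
    rw [Matrix.toEuclideanLin_eq_toLin, Matrix.toLin_mul _ (PiLp.basisFun 2 ℝ _) _]
    rfl
  -- Hessian and gradient bounds
  have hsym : ∀ i z v' w, ⟪h i z v', w⟫_ℝ = ⟪h i z w, v'⟫_ℝ :=
    fun i => hess_symm (f i) (g i) (h i) (hg i) (hh i)
  have hform0 : ∀ i z w, 0 ≤ ⟪h i z w, w⟫_ℝ :=
    fun i z w => le_trans (by positivity : (0:ℝ) ≤ μf * ‖w‖ ^ 2) (hlow i z w)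
  have hopn : ∀ i z w, ‖h i z w‖ ≤ Lf * ‖w‖ :=
    fun i z w => symm_op_norm_bound (h i z) Lf hLf0 (hsym i z) (hform0 i z) (hup i z) w
  have hopn' : ∀ i z, ‖h i z‖ ≤ Lf :=
    fun i z => ContinuousLinearMap.opNorm_le_bound _ hLf0 (hopn i z)
  have hglip : ∀ i a b', ‖g i a - g i b'‖ ≤ Lf * ‖a - b'‖ :=
    fun i => block_lip (g i) (h i) Lf (hh i) (hopn' i)
  have haggG : ∀ x1 x2 : Vnp n p, ‖aggGrad g x1 - aggGrad g x2‖ ≤ Lf * ‖x1 - x2‖ := by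
    intro x1 x2
    refine agg_norm_le _ _ Lf hLf0 fun i => ?_
    have hb1 : blk (aggGrad g x1 - aggGrad g x2) i = g i (blk x1 i) - g i (blk x2 i) := rfl
    have hb2 : blk (x1 - x2) i = blk x1 i - blk x2 i := rfl
    rw [hb1, hb2]
    exact hglip i _ _
  have haggH : ∀ x1 w : Vnp n p, ‖aggHess h x1 w‖ ≤ Lf * ‖w‖ := by
    intro x1 w
    refine agg_norm_le _ _ Lf hLf0 fun i => ?_
    have hb1 : blk (aggHess h x1 w) i = h i (blk x1 i) (blk w i) := rfl
    rw [hb1]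
    exact hopn i _ _
  haveI hnem : Nonempty (Fin n × Fin p) := ⟨(⟨0, hn⟩, ⟨0, hp⟩)⟩
  have hTmax : ∀ z : Vnp n p, ‖T z‖ ≤ lamMax (IWmat p W) * ‖z‖ :=
    fun z => norm_toEuclideanLin_le_lamMax hpsd z
  -- decomposition of S (v (t+1) - vs)
  set u : Vnp n p := v (t + 1) - vs with hudef
  set Δ : Vnp n p := x (t + 1) - x t with hΔdef
  set aa : Vnp n p := ε • (x t - x (t + 1)) with haadef
  set bb : Vnp n p := aggHess h (x t) (x t - x (t + 1))
      - (aggGrad g (x t) - aggGrad g (x (t + 1))) - α • T (x t - x (t + 1)) with hbbdef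
  set cc : Vnp n p := aggGrad g xs - aggGrad g (x (t + 1)) with hccdef
  have hSvs : S vs = - aggGrad g xs := eq_neg_of_add_eq_zero_right hK1
  have h1 : S u = S (v t) + α • T (x (t + 1)) + aggGrad g xs := by
    rw [hudef, map_sub, hdual t, map_add, LinearMap.map_smul, hSS, hSvs]
    abel
  have hSvt : S (v t) = aggHess h (x t) (x t - x (t + 1)) + ε • (x t - x (t + 1))
      - aggGrad g (x t) - α • T (x t) := by
    have e2 := hprimal t
    rw [eq_sub_iff_add_eq, eq_sub_iff_add_eq, e2]
    abel
  have hkey : S u = aa + bb + cc := by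
    rw [h1, hSvt, haadef, hbbdef, hccdef, LinearMap.map_sub T, smul_sub α (T (x t)) (T (x (t + 1)))]
    abel
  -- norms of the three pieces
  have hna : ‖aa‖ = ε * ‖Δ‖ := by
    rw [haadef, norm_smul, Real.norm_eq_abs, abs_of_pos hε, norm_sub_rev, hΔdef]
  have hnb : ‖bb‖ ≤ (2 * Lf + α * lamMax (IWmat p W)) * ‖Δ‖ := by
    have hb1 : ‖aggHess h (x t) (x t - x (t + 1))‖ ≤ Lf * ‖x t - x (t + 1)‖ := haggH _ _
    have hb2 : ‖aggGrad g (x t) - aggGrad g (x (t + 1))‖ ≤ Lf * ‖x t - x (t + 1)‖ :=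
      haggG _ _
    have hb3 : ‖α • T (x t - x (t + 1))‖ ≤ α * (lamMax (IWmat p W) * ‖x t - x (t + 1)‖) := by
      rw [norm_smul, Real.norm_eq_abs, abs_of_pos hα]
      exact mul_le_mul_of_nonneg_left (hTmax _) hα.le
    have htri : ‖bb‖ ≤ ‖aggHess h (x t) (x t - x (t + 1))‖
        + ‖aggGrad g (x t) - aggGrad g (x (t + 1))‖ + ‖α • T (x t - x (t + 1))‖ := by
      rw [hbbdef]
      refine le_trans (norm_sub_le _ _) ?_
      gcongr
      exact norm_sub_le _ _
    have hrev : ‖x t - x (t + 1)‖ = ‖Δ‖ := by rw [norm_sub_rev, hΔdef]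
    rw [hrev] at hb1 hb2 hb3
    nlinarith [htri]
  have hnc : ‖cc‖ ≤ Lf * ‖x (t + 1) - xs‖ := by
    rw [hccdef, norm_sub_rev]
    exact haggG _ _
  -- Peter–Paul combination
  have pp1 : ‖S u‖ ^ 2 ≤ (β / (β - 1)) * ‖aa‖ ^ 2 + β * ‖bb + cc‖ ^ 2 := by
    rw [hkey, add_assoc]; exact peter_paul _ _ hβ
  have pp2 : ‖bb + cc‖ ^ 2 ≤ (φ / (φ - 1)) * ‖bb‖ ^ 2 + φ * ‖cc‖ ^ 2 := peter_paul _ _ hφ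
  have hsq_a : ‖aa‖ ^ 2 = ε ^ 2 * ‖Δ‖ ^ 2 := by rw [hna]; ring
  have hsq_b : ‖bb‖ ^ 2 ≤ (2 * Lf + α * lamMax (IWmat p W)) ^ 2 * ‖Δ‖ ^ 2 := by
    calc ‖bb‖ ^ 2 ≤ ((2 * Lf + α * lamMax (IWmat p W)) * ‖Δ‖) ^ 2 :=
          pow_le_pow_left₀ (norm_nonneg bb) hnb 2
      _ = _ := by ring
  have hsq_c : ‖cc‖ ^ 2 ≤ Lf ^ 2 * ‖x (t + 1) - xs‖ ^ 2 := by
    calc ‖cc‖ ^ 2 ≤ (Lf * ‖x (t + 1) - xs‖) ^ 2 := pow_le_pow_left₀ (norm_nonneg cc) hnc 2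
      _ = _ := by ring
  have hβ0 : (0:ℝ) < β := by linarith
  have hφ0 : (0:ℝ) < φ := by linarith
  have hφ1 : (0:ℝ) < φ - 1 := by linarith
  have hbound : ‖S u‖ ^ 2 ≤
      (β * ε ^ 2 / (β - 1) + β * φ * (2 * Lf + α * lamMax (IWmat p W)) ^ 2 / (φ - 1))
        * ‖Δ‖ ^ 2 + β * φ * Lf ^ 2 * ‖x (t + 1) - xs‖ ^ 2 := by
    have hβ1 : (0:ℝ) < β - 1 := by linarith
    have step : ‖S u‖ ^ 2 ≤ (β / (β - 1)) * ‖aa‖ ^ 2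
        + β * ((φ / (φ - 1)) * ‖bb‖ ^ 2 + φ * ‖cc‖ ^ 2) := by
      have hm := mul_le_mul_of_nonneg_left pp2 hβ0.le
      linarith
    have hdist : β * ((φ / (φ - 1)) * ‖bb‖ ^ 2 + φ * ‖cc‖ ^ 2)
        = β * ((φ / (φ - 1)) * ‖bb‖ ^ 2) + β * (φ * ‖cc‖ ^ 2) := by ring
    have c1 : (β / (β - 1)) * ‖aa‖ ^ 2 = β * ε ^ 2 / (β - 1) * ‖Δ‖ ^ 2 := by
      rw [hsq_a]; ring
    have t2 : β * ((φ / (φ - 1)) * ‖bb‖ ^ 2)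
        ≤ β * φ * (2 * Lf + α * lamMax (IWmat p W)) ^ 2 / (φ - 1) * ‖Δ‖ ^ 2 := by
      have h2 := mul_le_mul_of_nonneg_left hsq_b
        (mul_nonneg hβ0.le (div_nonneg hφ0.le hφ1.le))
      calc β * ((φ / (φ - 1)) * ‖bb‖ ^ 2) = β * (φ / (φ - 1)) * ‖bb‖ ^ 2 := by ring
        _ ≤ β * (φ / (φ - 1)) * ((2 * Lf + α * lamMax (IWmat p W)) ^ 2 * ‖Δ‖ ^ 2) := h2
        _ = β * φ * (2 * Lf + α * lamMax (IWmat p W)) ^ 2 / (φ - 1) * ‖Δ‖ ^ 2 := by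
            field_simp
    have t3 : β * (φ * ‖cc‖ ^ 2) ≤ β * φ * Lf ^ 2 * ‖x (t + 1) - xs‖ ^ 2 := by
      have h3 := mul_le_mul_of_nonneg_left hsq_c (mul_nonneg hβ0.le hφ0.le)
      calc β * (φ * ‖cc‖ ^ 2) = β * φ * ‖cc‖ ^ 2 := by ring
        _ ≤ β * φ * (Lf ^ 2 * ‖x (t + 1) - xs‖ ^ 2) := h3
        _ = _ := by ring
    linarith
  obtain ⟨y, hy⟩ := hcol
  have hmain : ‖u‖ ^ 2 ≤ (1 / lamMinNZ (IWmat p W)) * ‖S u‖ ^ 2 := by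
    have hq := sq_norm_le_inv_lamMinNZ hpsd y
    rw [← hSdef, ← hy] at hq
    exact hq
  have hlamnn := lamMinNZ_nonneg hpsd
  refine le_trans hmain ?_
  exact mul_le_mul_of_nonneg_left hbound (one_div_nonneg.mpr hlamnn)
end
end
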